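/- For λ ⊆ [n] with |λ| = k, the affine permutation f_{min,λ} defined by f(i) = i + n if i mod n ∈ λ and f(i) = i otherwise, is bounded, has av(f_{min,λ}) = k, and has length ℓ(f_{min,λ}) = k(n−k). -/

import Mathlib

noncomputable def alen (n : ℕ) (f : ℤ → ℤ) : ℕ :=
  Set.ncard {p : ℤ × ℤ | 1 ≤ p.1 ∧ p.1 ≤ n ∧ p.1 < p.2 ∧ f p.2 < f p.1}

theorem fmin_properties (n k : ℕ) (hn : 1 ≤ n) (hk : k ≤ n)
    (lam : Finset ℤ) (hlam : lam ⊆ Finset.Icc (1 : ℤ) (n : ℤ)) (hcard : lam.card = k) :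
    Function.Bijective (fun i : ℤ => if (i - 1) % n + 1 ∈ lam then i + n else i) ∧
    (∀ i : ℤ, (fun i : ℤ => if (i - 1) % n + 1 ∈ lam then i + n else i) (i + n)
        = (fun i : ℤ => if (i - 1) % n + 1 ∈ lam then i + n else i) i + n) ∧
    (∀ i : ℤ, i ≤ (if (i - 1) % n + 1 ∈ lam then i + n else i) ∧
        (if (i - 1) % n + 1 ∈ lam then i + n else i) ≤ i + n) ∧
    (∑ i ∈ Finset.Icc (1 : ℤ) (n : ℤ),
        ((if (i - 1) % n + 1 ∈ lam then i + n else i) - i) = n * k) ∧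
    alen n (fun i : ℤ => if (i - 1) % n + 1 ∈ lam then i + n else i) = k * (n - k) := by
  classical
  have hN1 : (1 : ℤ) ≤ (n : ℤ) := by exact_mod_cast hn
  set N : ℤ := (n : ℤ) with hNdef
  have res_mem : ∀ i : ℤ, 1 ≤ i → i ≤ N → (i - 1) % N + 1 = i := by
    intro i h1 h2
    rw [Int.emod_eq_of_lt (by omega) (by omega)]; ring
  have res_per : ∀ i : ℤ, (i + N - 1) % N = (i - 1) % N := by
    intro i
    rw [show i + N - 1 = (i - 1) + 1 * N by ring, Int.add_mul_emod_self_right]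
  have res_range : ∀ j : ℤ, 1 ≤ (j - 1) % N + 1 ∧ (j - 1) % N + 1 ≤ N := by
    intro j
    have h1 := Int.emod_nonneg (j - 1) (by omega : N ≠ 0)
    have h2 := Int.emod_lt_of_pos (j - 1) (by omega : 0 < N)
    omega
  have res_dvd : ∀ j : ℤ, ∃ m : ℤ, j - ((j - 1) % N + 1) = N * m := by
    intro j
    exact ⟨(j - 1) / N, by linarith [Int.emod_add_mul_ediv (j - 1) N]⟩
  refine ⟨?_, ?_, ?_, ?_, ?_⟩
  · constructor
    · intro a b hab
      simp only at hab
      by_cases ha : (a - 1) % N + 1 ∈ lam <;> by_cases hb : (b - 1) % N + 1 ∈ lam <;>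
        simp only [ha, hb, if_true, if_false] at hab
      · omega
      · exfalso
        have h : (a + N - 1) % N + 1 ∈ lam := by rw [res_per]; exact ha
        rw [hab] at h; exact hb h
      · exfalso
        have h : (a - 1) % N + 1 ∈ lam := by rw [hab, res_per]; exact hb
        exact ha h
      · exact hab
    · intro b
      by_cases hb : (b - 1) % N + 1 ∈ lam
      · refine ⟨b - N, ?_⟩
        simp only
        have : (b - N + N - 1) % N = (b - N - 1) % N := res_per (b - N)
        have hb' : (b - N - 1) % N + 1 ∈ lam := by
          rw [show b - N - 1 = (b - 1) + (-1) * N by ring, Int.add_mul_emod_self_right]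
          exact hb
        rw [if_pos hb']; ring
      · exact ⟨b, by simp only [if_neg hb]⟩
  · intro i
    simp only
    rw [show i + N - 1 = (i - 1) + 1 * N by ring, Int.add_mul_emod_self_right]
    split <;> ring
  · intro i; constructor <;> [skip; skip] <;> split <;> omega
  · have hcongr : ∀ i ∈ Finset.Icc (1 : ℤ) N,
        ((if (i - 1) % N + 1 ∈ lam then i + N else i) - i) = if i ∈ lam then N else 0 := by
      intro i hi
      rw [Finset.mem_Icc] at hi
      rw [res_mem i hi.1 hi.2]
      split <;> ring
    rw [Finset.sum_congr rfl hcongr, Finset.sum_ite_mem,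
      Finset.inter_eq_right.mpr hlam, Finset.sum_const, hcard]
    ring
  · set f : ℤ → ℤ := fun i => if (i - 1) % N + 1 ∈ lam then i + N else i with hf
    set T : Finset (ℤ × ℤ) := lam.biUnion (fun i =>
      (Finset.Icc (1 : ℤ) N \ lam).image (fun r => (i, if i < r then r else r + N))) with hT
    have hset : {p : ℤ × ℤ | 1 ≤ p.1 ∧ p.1 ≤ N ∧ p.1 < p.2 ∧ f p.2 < f p.1} = ↑T := by
      ext ⟨i, j⟩
      simp only [Set.mem_setOf_eq, Finset.coe_biUnion, Set.mem_iUnion, Finset.mem_coe,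
        Finset.mem_image, Finset.mem_sdiff, Finset.mem_Icc, hT]
      constructor
      · rintro ⟨h1, h2, h3, h4⟩
        have hresi : (i - 1) % N + 1 = i := res_mem i h1 h2
        have hfj2 : f j = j ∨ f j = j + N := by
          simp only [hf]; split
          · right; rfl
          · left; rfl
        by_cases hi : i ∈ lam
        swap
        · exfalso
          have : f i = i := by simp only [hf, hresi, if_neg hi]
          omega
        have hfi : f i = i + N := by simp only [hf, hresi, if_pos hi]
        have hrj : (j - 1) % N + 1 ∉ lam := by
          intro hrl
          have : f j = j + N := by simp only [hf, if_pos hrl]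
          omega
        have hfj : f j = j := by simp only [hf, if_neg hrj]
        have hjlt : j < i + N := by omega
        set r := (j - 1) % N + 1 with hr
        have hr1 := res_range j
        obtain ⟨m, hm⟩ := res_dvd j
        have hmlb : (-1 : ℤ) < m := by
          have h : N * (-1) < N * m := by linarith
          exact lt_of_mul_lt_mul_left h (by omega)
        have hmub : m < 2 := by
          have h : N * m < N * 2 := by linarith
          exact lt_of_mul_lt_mul_left h (by omega)
        refine ⟨i, hi, r, ⟨⟨hr1.1, hr1.2⟩, hrj⟩, ?_⟩
        have : m = 0 ∨ m = 1 := by omega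
        rcases this with hm0 | hm1
        · have hjr : j = r := by rw [hm0] at hm; omega
          rw [if_pos (by omega), hjr]
        · have hjr : j = r + N := by rw [hm1] at hm; omega
          have : ¬ i < r := by omega
          rw [if_neg this, hjr]
      · rintro ⟨a, ha, r, ⟨⟨hr1, hr2⟩, hrl⟩, heq⟩
        have haI := hlam ha
        rw [Finset.mem_Icc] at haI
        obtain ⟨hi1, hi2⟩ := haI
        have heq1 : a = i := congrArg Prod.fst heq
        have heq2 : (if a < r then r else r + N) = j := congrArg Prod.snd heq
        subst heq1
        have hra : r ≠ a := fun h => hrl (h ▸ ha)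
        have hresa : (a - 1) % N + 1 = a := res_mem a hi1 hi2
        have hfa : f a = a + N := by simp only [hf, hresa, if_pos ha]
        have hresj : (j - 1) % N + 1 = r := by
          rcases lt_or_ge a r with hcase | hcase
          · rw [if_pos hcase] at heq2; rw [← heq2]; exact res_mem r hr1 hr2
          · rw [if_neg (not_lt.mpr hcase)] at heq2
            rw [← heq2, show r + N - 1 = (r - 1) + 1 * N by ring, Int.add_mul_emod_self_right]
            exact res_mem r hr1 hr2
        have hfj : f j = j := by simp only [hf, hresj, if_neg hrl]
        rcases lt_or_ge a r with hcase | hcase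
        · rw [if_pos hcase] at heq2
          refine ⟨hi1, hi2, by omega, by rw [hfj, hfa]; omega⟩
        · rw [if_neg (not_lt.mpr hcase)] at heq2
          refine ⟨hi1, hi2, by omega, by rw [hfj, hfa]; omega⟩
    have halen : alen n f = T.card := by
      rw [alen, ← hNdef, hset, Set.ncard_coe_finset]
    rw [halen, hT, Finset.card_biUnion]
    · have hinner : ∀ i ∈ lam,
          ((Finset.Icc (1 : ℤ) N \ lam).image (fun r => (i, if i < r then r else r + N))).card
            = n - k := by
        intro i hi
        rw [Finset.card_image_of_injOn]
        · rw [Finset.card_sdiff_of_subset hlam, hcard, Int.card_Icc]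
          congr 1
          omega
        · intro r hr r' hr' hrr
          simp only [Finset.mem_coe, Finset.mem_sdiff, Finset.mem_Icc] at hr hr'
          have : (if i < r then r else r + N) = (if i < r' then r' else r' + N) :=
            congrArg Prod.snd hrr
          split at this <;> split at this <;> omega
      rw [Finset.sum_congr rfl hinner, Finset.sum_const, hcard, smul_eq_mul]
    · intro a ha b hb hab
      rw [Function.onFun, Finset.disjoint_left]
      intro p hp hp'
      simp only [Finset.mem_image] at hp hp'
      obtain ⟨r, _, hr⟩ := hp
      obtain ⟨r', _, hr'⟩ := hp'
      have h1 : p.1 = a := by rw [← hr]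
      have h2 : p.1 = b := by rw [← hr']
      exact hab (h1 ▸ h2)
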